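/- Let U be a finite type, f : Finset U → ℝ monotone and submodular with f(∅) = 0, and let OPT ⊆ U be a finite set with |OPT| = m ≥ 1. Let (S_k)_{k ≥ 0} be a greedy sequence: S_0 = ∅ and for each k, S_{k+1} = S_k ∪ {x_k} where x_k satisfies f(S_k ∪ {x_k}) − f(S_k) ≥ f(S_k ∪ {y}) − f(S_k) for all y ∈ U. Then for every k ≥ 0, f(S_k) ≥ (1 − (1 − 1/m)^k) · f(OPT). -/

import Mathlib

/-- If `f` is monotone, submodular, and `f(∅) = 0`, `|OPT| = m ≥ 1`, and `(S k)` is a greedy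
sequence, then for every `k`, `f(S k) ≥ (1 − (1 − 1/m)^k) · f(OPT)`. -/
theorem submodular_greedy_sequence_bound
    {U : Type*} [Fintype U] [DecidableEq U] (f : Finset U → ℝ)
    (hmono : ∀ A B : Finset U, A ⊆ B → f A ≤ f B)
    (hsub : ∀ A B : Finset U, A ⊆ B → ∀ x ∉ B,
      f (B ∪ {x}) - f B ≤ f (A ∪ {x}) - f A)
    (hempty : f ∅ = 0)
    (OPT : Finset U) (m : ℕ) (hOPT : OPT.card = m) (hm : 1 ≤ m)
    (S : ℕ → Finset U) (x : ℕ → U)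
    (hS0 : S 0 = ∅)
    (hSsucc : ∀ k, S (k + 1) = S k ∪ {x k})
    (hgreedy : ∀ k, ∀ y : U, f (S k ∪ {y}) - f (S k) ≤ f (S k ∪ {x k}) - f (S k)) :
    ∀ k, (1 - (1 - 1 / (m : ℝ)) ^ k) * f OPT ≤ f (S k) := by
  have hmpos : (0:ℝ) < m := by exact_mod_cast hm
  -- subadditivity of marginals
  have hsubadd : ∀ (T A : Finset U),
      f (A ∪ T) - f A ≤ ∑ y ∈ T, (f (A ∪ {y}) - f A) := by
    intro T
    induction T using Finset.induction_on with
    | empty => intro A; simp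
    | insert y T hy ih =>
      intro A
      have hU : A ∪ insert y T = (A ∪ T) ∪ {y} := by
        rw [Finset.union_insert, Finset.insert_eq, Finset.union_comm {y}]
      rw [hU, Finset.sum_insert hy]
      have h1 : f ((A ∪ T) ∪ {y}) - f (A ∪ T) ≤ f (A ∪ {y}) - f A := by
        by_cases hmem : y ∈ A ∪ T
        · have : (A ∪ T) ∪ {y} = A ∪ T := by
            rw [Finset.union_comm, ← Finset.insert_eq, Finset.insert_eq_self.2 hmem]
          rw [this]
          have := hmono A (A ∪ {y}) Finset.subset_union_left
          linarith
        · exact hsub A (A ∪ T) Finset.subset_union_left y hmem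
      have h2 := ih A
      linarith
  -- per-step bound
  have hstep : ∀ k, f OPT - f (S k) ≤ m * (f (S (k+1)) - f (S k)) := by
    intro k
    have h1 : f OPT ≤ f (S k ∪ OPT) := hmono OPT _ Finset.subset_union_right
    have h2 := hsubadd OPT (S k)
    have h3 : ∑ y ∈ OPT, (f (S k ∪ {y}) - f (S k))
        ≤ ∑ _y ∈ OPT, (f (S k ∪ {x k}) - f (S k)) :=
      Finset.sum_le_sum fun y _ => hgreedy k y
    have h4 : ∑ _y ∈ OPT, (f (S k ∪ {x k}) - f (S k))
        = m * (f (S (k+1)) - f (S k)) := by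
      rw [Finset.sum_const, hOPT, hSsucc k, nsmul_eq_mul]
    linarith
  -- main induction: f OPT - f (S k) ≤ (1 - 1/m)^k * f OPT
  have key : ∀ k, f OPT - f (S k) ≤ (1 - 1/(m:ℝ))^k * f OPT := by
    intro k
    induction k with
    | zero => simp [hS0, hempty]
    | succ k ih =>
      have hst := hstep k
      have hq : (0:ℝ) ≤ 1 - 1/(m:ℝ) := by
        have : 1/(m:ℝ) ≤ 1 := by
          rw [div_le_one hmpos]; exact_mod_cast hm
        linarith
      have hdelta : (1/(m:ℝ)) * (f OPT - f (S k)) ≤ f (S (k+1)) - f (S k) := by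
        rw [div_mul_eq_mul_div, div_le_iff₀ hmpos]
        linarith [hst]
      have h5 : f OPT - f (S (k+1)) ≤ (1 - 1/(m:ℝ)) * (f OPT - f (S k)) := by
        ring_nf
        ring_nf at hdelta
        linarith
      calc f OPT - f (S (k+1)) ≤ (1 - 1/(m:ℝ)) * (f OPT - f (S k)) := h5
        _ ≤ (1 - 1/(m:ℝ)) * ((1 - 1/(m:ℝ))^k * f OPT) :=
            mul_le_mul_of_nonneg_left ih hq
        _ = (1 - 1/(m:ℝ))^(k+1) * f OPT := by ring
  intro k
  have := key k
  linarith
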